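/- Let f : ℝⁿ → ℝ be a C^2 function and let a ∈ ℝⁿ be a nondegenerate critical point of f. Then a is a C^1-stable critical point of f: for every μ > 0 there exists δ > 0 such that every C^1 function h : ℝⁿ → ℝ satisfying sup_{|x−a| ≤ μ} ( |f(x) − h(x)| + |∇f(x) − ∇h(x)| ) ≤ δ has at least one critical point q with |q − a| < μ. -/

import Mathlib

open Function

open Metric Set MeasureTheory RealInnerProductSpace
open scoped Convolution


theorem det_one_add_smul_expand {n : ℕ} (t : ℝ) (M : Matrix (Fin n) (Fin n) ℝ) :
    (1 + t • M).det = ∑ s : Finset (Fin n), t ^ s.card * Matrix.det (fun i => if i ∈ s then M i else (1 : Matrix (Fin n) (Fin n) ℝ) i) := by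
  classical
  have key := (Matrix.detRowAlternating (R := ℝ) (n := Fin n)).toMultilinearMap.map_add_univ
    ((t • M : Matrix (Fin n) (Fin n) ℝ) : Fin n → Fin n → ℝ) ((1 : Matrix (Fin n) (Fin n) ℝ) : Fin n → Fin n → ℝ)
  have h0 : (1 + t • M : Matrix (Fin n) (Fin n) ℝ) = ((t • M : Matrix (Fin n) (Fin n) ℝ) : Fin n → Fin n → ℝ) + ((1 : Matrix (Fin n) (Fin n) ℝ) : Fin n → Fin n → ℝ) := by
    ext i j; exact add_comm _ _
  have step : (1 + t • M).det = ∑ s : Finset (Fin n), Matrix.detRowAlternating (s.piecewise ((t • M : Matrix (Fin n) (Fin n) ℝ) : Fin n → Fin n → ℝ) ((1 : Matrix (Fin n) (Fin n) ℝ) : Fin n → Fin n → ℝ)) := by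
    rw [show (1 + t • M).det = Matrix.detRowAlternating (((t • M : Matrix (Fin n) (Fin n) ℝ) : Fin n → Fin n → ℝ) + ((1 : Matrix (Fin n) (Fin n) ℝ) : Fin n → Fin n → ℝ)) by rw [← h0]; rfl]
    exact key
  rw [step]
  refine Finset.sum_congr rfl fun s _ => ?_
  have h2 : (s.piecewise ((t • M : Matrix (Fin n) (Fin n) ℝ) : Fin n → Fin n → ℝ) ((1 : Matrix (Fin n) (Fin n) ℝ) : Fin n → Fin n → ℝ)) =
      fun i => (if i ∈ s then t else 1) • (s.piecewise (M : Fin n → Fin n → ℝ) ((1 : Matrix (Fin n) (Fin n) ℝ) : Fin n → Fin n → ℝ)) i := by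
    ext i j
    by_cases h : i ∈ s <;> simp [Finset.piecewise, h]
  rw [h2]
  have h5 := (Matrix.detRowAlternating (R := ℝ) (n := Fin n)).toMultilinearMap.map_smul_univ
    (fun i => if i ∈ s then t else 1) (s.piecewise (M : Fin n → Fin n → ℝ) ((1 : Matrix (Fin n) (Fin n) ℝ) : Fin n → Fin n → ℝ))
  have h3 : ∏ i : Fin n, (if i ∈ s then t else 1) = t ^ s.card := by
    rw [Finset.prod_ite_mem]
    simp [Finset.univ_inter]
  have h4 : (s.piecewise (M : Fin n → Fin n → ℝ) ((1 : Matrix (Fin n) (Fin n) ℝ) : Fin n → Fin n → ℝ)) = fun i => if i ∈ s then M i else (1 : Matrix (Fin n) (Fin n) ℝ) i := by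
    ext i j; by_cases h : i ∈ s <;> simp [Finset.piecewise, h]
  rw [h3, h4] at h5
  rw [show (Matrix.detRowAlternating fun i => (if i ∈ s then t else 1) • s.piecewise (M : Fin n → Fin n → ℝ) ((1 : Matrix (Fin n) (Fin n) ℝ) : Fin n → Fin n → ℝ) i) = t ^ s.card • Matrix.detRowAlternating (fun i => if i ∈ s then M i else (1 : Matrix (Fin n) (Fin n) ℝ) i) from h5]
  rw [smul_eq_mul]
  rfl

set_option maxHeartbeats 1000000 in
theorem no_retraction {n : ℕ} {r : EuclideanSpace ℝ (Fin n) → EuclideanSpace ℝ (Fin n)}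
    {U : Set (EuclideanSpace ℝ (Fin n))} (hUo : IsOpen U) (hBU : closedBall 0 1 ⊆ U)
    (hr : ContDiffOn ℝ 1 r U)
    (hnorm : ∀ x ∈ U, ‖r x‖ = 1)
    (hid : ∀ x ∈ sphere (0 : EuclideanSpace ℝ (Fin n)) 1, r x = x) : False := by
  classical
  set B : Set (EuclideanSpace ℝ (Fin n)) := closedBall 0 1 with hB
  have hBc : IsCompact B := isCompact_closedBall _ _
  have hBconv : Convex ℝ B := convex_closedBall _ _
  have hBmeas : MeasurableSet B := measurableSet_closedBall
  -- the vector field u = r - id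
  set u : EuclideanSpace ℝ (Fin n) → EuclideanSpace ℝ (Fin n) := fun x => r x - x with hu_def
  have hu : ContDiffOn ℝ 1 u U := hr.sub contDiffOn_id
  set Du : EuclideanSpace ℝ (Fin n) → EuclideanSpace ℝ (Fin n) →L[ℝ] EuclideanSpace ℝ (Fin n) :=
    fun x => fderiv ℝ u x with hDu_def
  have hDuc : ContinuousOn Du U := hu.continuousOn_fderiv_of_isOpen hUo le_rfl
  have hud : ∀ x ∈ U, HasFDerivAt u (Du x) x := by
    intro x hx
    exact ((hu.differentiableOn one_ne_zero).differentiableAt (hUo.mem_nhds hx)).hasFDerivAt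
  -- bound on the derivative
  obtain ⟨C0, hC0⟩ : ∃ C0, ∀ x ∈ B, ‖Du x‖ ≤ C0 := hBc.exists_bound_of_continuousOn (hDuc.mono hBU)
  set C : ℝ := max C0 0 with hC_def
  have hC : ∀ x ∈ B, ‖Du x‖ ≤ C := fun x hx => le_max_of_le_left (hC0 x hx)
  have hCnn : 0 ≤ C := le_max_right _ _
  set t₀ : ℝ := 1 / (2 * (C + 1)) with ht₀_def
  have ht₀pos : 0 < t₀ := by positivity
  have ht₀le : ∀ t ∈ Icc (0:ℝ) t₀, t * C < 1 := by
    intro t ht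
    have h1 : t * C ≤ t₀ * C := mul_le_mul_of_nonneg_right ht.2 hCnn
    have h2 : t₀ * C < 1 := by
      rw [ht₀_def, div_mul_eq_mul_div, one_mul, div_lt_one (by positivity)]
      nlinarith
    linarith
  have ht₀le1 : t₀ ≤ 1/2 := by
    rw [ht₀_def]
    apply div_le_div_of_nonneg_left one_pos.le two_pos
    nlinarith
  -- the homotopy maps
  set ft : ℝ → EuclideanSpace ℝ (Fin n) → EuclideanSpace ℝ (Fin n) := fun t x => x + t • u x with hft_def
  set Dft : ℝ → EuclideanSpace ℝ (Fin n) → EuclideanSpace ℝ (Fin n) →L[ℝ] EuclideanSpace ℝ (Fin n) :=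
    fun t x => ContinuousLinearMap.id ℝ (EuclideanSpace ℝ (Fin n)) + t • Du x with hDft_def
  have hftd : ∀ t : ℝ, ∀ x ∈ U, HasFDerivAt (ft t) (Dft t x) x := by
    intro t x hx
    exact (hasFDerivAt_id x).add ((hud x hx).const_smul t)
  have hftapp : ∀ t x v, Dft t x v = v + t • Du x v := by
    intro t x v
    simp [hDft_def]
  -- matrix representation
  set bE : Module.Basis (Fin n) ℝ (EuclideanSpace ℝ (Fin n)) := (EuclideanSpace.basisFun (Fin n) ℝ).toBasis with hbE_def
  set M : EuclideanSpace ℝ (Fin n) → Matrix (Fin n) (Fin n) ℝ :=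
    fun x => LinearMap.toMatrix bE bE ((Du x : EuclideanSpace ℝ (Fin n) →L[ℝ] EuclideanSpace ℝ (Fin n)) : EuclideanSpace ℝ (Fin n) →ₗ[ℝ] EuclideanSpace ℝ (Fin n)) with hM_def
  have hdet : ∀ (t : ℝ) (x : EuclideanSpace ℝ (Fin n)), (Dft t x).det = (1 + t • M x).det := by
    intro t x
    show LinearMap.det _ = _
    rw [← LinearMap.det_toMatrix bE]
    congr 1
    rw [hDft_def]
    simp only [ContinuousLinearMap.coe_add, ContinuousLinearMap.coe_smul, map_add,
      LinearMapClass.map_smul, _root_.map_smul]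
    congr 1
    simp [ContinuousLinearMap.coe_id, LinearMap.toMatrix_id]
  -- continuity of matrix entries
  have hMentry : ∀ i j x, M x i j = (Du x (bE j)) i := by
    intro i j x
    rw [hM_def]
    simp only [LinearMap.toMatrix_apply, ContinuousLinearMap.coe_coe, hbE_def,
      OrthonormalBasis.coe_toBasis_repr_apply, OrthonormalBasis.coe_toBasis]
    rfl
  have hMc : ContinuousOn M U := by
    apply continuousOn_pi.2
    intro i
    rw [continuousOn_pi]
    intro j
    simp only [hMentry]
    have h1 : ContinuousOn (fun x => Du x (bE j)) U :=
      (ContinuousLinearMap.apply ℝ (EuclideanSpace ℝ (Fin n)) (bE j)).continuous.comp_continuousOn hDuc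
    exact (EuclideanSpace.proj i).continuous.comp_continuousOn h1
  -- invertibility of Dft t x for t ∈ [0, t₀]
  have hbij : ∀ t ∈ Icc (0:ℝ) t₀, ∀ x ∈ B, Function.Bijective (Dft t x) := by
    intro t ht x hx
    have hinj : Function.Injective (Dft t x) := by
      intro v w hvw
      have h2 : v + t • Du x v = w + t • Du x w := by
        rw [← hftapp t x v, ← hftapp t x w, hvw]
      have h3 : v - w + (t • Du x v - t • Du x w) = 0 := by
        rw [sub_add_sub_comm, h2, sub_self]
      have h1 : v - w = -(t • Du x (v - w)) := by
        rw [map_sub, smul_sub]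
        exact eq_neg_of_add_eq_zero_left h3
      have h3 : ‖v - w‖ ≤ t * C * ‖v - w‖ := by
        calc ‖v - w‖ = ‖t • Du x (v - w)‖ := by conv_lhs => rw [h1, norm_neg]
        _ = t * ‖Du x (v - w)‖ := by rw [norm_smul, Real.norm_eq_abs, abs_of_nonneg ht.1]
        _ ≤ t * (C * ‖v - w‖) := by
            refine mul_le_mul_of_nonneg_left ?_ ht.1
            calc ‖Du x (v - w)‖ ≤ ‖Du x‖ * ‖v - w‖ := (Du x).le_opNorm _
            _ ≤ C * ‖v - w‖ := mul_le_mul_of_nonneg_right (hC x hx) (norm_nonneg _)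
        _ = t * C * ‖v - w‖ := by ring
      have h4 : v - w = 0 := by
        by_contra hne
        have hpos : 0 < ‖v - w‖ := norm_pos_iff.2 (sub_ne_zero.2 fun h => hne (by rw [h, sub_self]))
        nlinarith [ht₀le t ht]
      exact sub_eq_zero.1 h4
    refine ⟨hinj, ?_⟩
    have : Function.Surjective ((Dft t x : _) : EuclideanSpace ℝ (Fin n) →ₗ[ℝ] EuclideanSpace ℝ (Fin n)) :=
      LinearMap.surjective_of_injective hinj
    exact this
  have hdet_ne : ∀ t ∈ Icc (0:ℝ) t₀, ∀ x ∈ B, (1 + t • M x).det ≠ 0 := by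
    intro t ht x hx
    rw [← hdet]
    have hunit : IsUnit ((Dft t x : _) : EuclideanSpace ℝ (Fin n) →ₗ[ℝ] EuclideanSpace ℝ (Fin n)) :=
      (Module.End.isUnit_iff _).2 (hbij t ht x hx)
    exact (LinearMap.isUnit_det _ hunit).ne_zero
  -- positivity of the determinant on [0,t₀] × B
  have hdet_pos : ∀ t ∈ Icc (0:ℝ) t₀, ∀ x ∈ B, 0 < (1 + t • M x).det := by
    have hKconn : IsPreconnected (Icc (0:ℝ) t₀ ×ˢ B) :=
      ((convex_Icc _ _).prod hBconv).isPreconnected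
    have hsnd : ContinuousOn (fun q : ℝ × EuclideanSpace ℝ (Fin n) => M q.2) (Icc (0:ℝ) t₀ ×ˢ B) :=
      hMc.comp continuousOn_snd (fun q hq => hBU hq.2)
    have hKcont : ContinuousOn (fun q : ℝ × EuclideanSpace ℝ (Fin n) => (1 + q.1 • M q.2).det)
        (Icc (0:ℝ) t₀ ×ˢ B) := by
      apply (Continuous.matrix_det continuous_id).comp_continuousOn
      apply continuousOn_pi.2
      intro i
      rw [continuousOn_pi]
      intro j
      have hentry : ContinuousOn (fun q : ℝ × EuclideanSpace ℝ (Fin n) => M q.2 i j) (Icc (0:ℝ) t₀ ×ˢ B) :=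
        (continuousOn_pi.1 (continuousOn_pi.1 hsnd i) j)
      have : (fun q : ℝ × EuclideanSpace ℝ (Fin n) => (1 + q.1 • M q.2) i j)
          = fun q => (1 : Matrix (Fin n) (Fin n) ℝ) i j + q.1 * M q.2 i j := by
        funext q; simp [Matrix.add_apply, Matrix.smul_apply]
      rw [this]
      exact continuousOn_const.add (continuousOn_fst.mul hentry)
    by_contra hcon
    push_neg at hcon
    obtain ⟨t1, ht1, x1, hx1, hle⟩ := hcon
    have h00 : ((0:ℝ), (0 : EuclideanSpace ℝ (Fin n))) ∈ Icc (0:ℝ) t₀ ×ˢ B := by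
      constructor
      · exact ⟨le_rfl, ht₀pos.le⟩
      · exact mem_closedBall_self one_pos.le
    have hval1 : (fun q : ℝ × EuclideanSpace ℝ (Fin n) => (1 + q.1 • M q.2).det) (0, 0) = 1 := by
      simp
    have himg : IsPreconnected ((fun q : ℝ × EuclideanSpace ℝ (Fin n) => (1 + q.1 • M q.2).det) '' (Icc (0:ℝ) t₀ ×ˢ B)) :=
      hKconn.image _ hKcont
    have hmem1 : (1:ℝ) ∈ (fun q : ℝ × EuclideanSpace ℝ (Fin n) => (1 + q.1 • M q.2).det) '' (Icc (0:ℝ) t₀ ×ˢ B) :=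
      ⟨(0,0), h00, hval1⟩
    have hmemv : (1 + t1 • M x1).det ∈ (fun q : ℝ × EuclideanSpace ℝ (Fin n) => (1 + q.1 • M q.2).det) '' (Icc (0:ℝ) t₀ ×ˢ B) :=
      ⟨(t1, x1), ⟨ht1, hx1⟩, rfl⟩
    have h0mem : (0:ℝ) ∈ (fun q : ℝ × EuclideanSpace ℝ (Fin n) => (1 + q.1 • M q.2).det) '' (Icc (0:ℝ) t₀ ×ˢ B) :=
      himg.Icc_subset hmemv hmem1 ⟨hle, one_pos.le⟩
    obtain ⟨q, hq, hq0⟩ := h0mem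
    exact hdet_ne q.1 hq.1 q.2 hq.2 hq0
  -- u vanishes on the sphere
  have husphere : ∀ x ∈ sphere (0 : EuclideanSpace ℝ (Fin n)) 1, u x = 0 := by
    intro x hx
    simp only [hu_def]
    rw [hid x hx, sub_self]
  -- ft maps B into B
  have hmapsto : ∀ t ∈ Icc (0:ℝ) t₀, ∀ x ∈ B, ft t x ∈ B := by
    intro t ht x hx
    have hx1 : ‖x‖ ≤ 1 := mem_closedBall_zero_iff.1 hx
    have hsplit : ft t x = (1 - t) • x + t • r x := by
      simp only [hft_def, hu_def]
      rw [smul_sub, sub_smul, one_smul]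
      abel
    have ht1 : t ≤ 1 := le_trans ht.2 (by linarith)
    rw [mem_closedBall_zero_iff, hsplit]
    calc ‖(1 - t) • x + t • r x‖ ≤ ‖(1 - t) • x‖ + ‖t • r x‖ := norm_add_le _ _
      _ = (1 - t) * ‖x‖ + t * ‖r x‖ := by
          rw [norm_smul, norm_smul, Real.norm_eq_abs, Real.norm_eq_abs,
            abs_of_nonneg (by linarith : (0:ℝ) ≤ 1 - t), abs_of_nonneg ht.1]
      _ ≤ (1 - t) * 1 + t * 1 := by
          have hr1 : ‖r x‖ = 1 := hnorm x (hBU hx)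
          rw [hr1]
          have : (1 - t) * ‖x‖ ≤ (1 - t) * 1 := mul_le_mul_of_nonneg_left hx1 (by linarith)
          linarith
      _ = 1 := by ring
  -- ft is injective on B
  have hinjOn : ∀ t ∈ Icc (0:ℝ) t₀, InjOn (ft t) B := by
    intro t ht x hx y hy hxy
    have hlip : ‖u y - u x‖ ≤ C * ‖y - x‖ :=
      hBconv.norm_image_sub_le_of_norm_hasFDerivWithin_le
        (fun z hz => (hud z (hBU hz)).hasFDerivWithinAt) (fun z hz => hC z hz) hx hy
    have h2 : x + t • u x = y + t • u y := hxy
    have h3 : x - y = t • (u y - u x) := by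
      rw [smul_sub]
      have h5 := eq_neg_of_add_eq_zero_left (a := x - y) (b := t • u x - t • u y) (by rw [sub_add_sub_comm, h2, sub_self])
      rw [neg_sub] at h5
      exact h5
    have h4 : ‖x - y‖ ≤ t * C * ‖x - y‖ := by
      calc ‖x - y‖ = t * ‖u y - u x‖ := by
            rw [h3, norm_smul, Real.norm_eq_abs, abs_of_nonneg ht.1]
        _ ≤ t * (C * ‖y - x‖) := mul_le_mul_of_nonneg_left hlip ht.1
        _ = t * C * ‖x - y‖ := by rw [norm_sub_rev]; ring
    by_contra hne
    have hpos : 0 < ‖x - y‖ := norm_pos_iff.2 (sub_ne_zero.2 hne)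
    nlinarith [ht₀le t ht]
  -- continuity of ft t on B
  have hftcont : ∀ t : ℝ, ContinuousOn (ft t) B := by
    intro t
    exact (continuousOn_id.add ((hu.continuousOn.mono hBU).const_smul t))
  -- surjectivity of ft t on B, for 0 < t ≤ t₀
  have hsurj : ∀ t ∈ Ioc (0:ℝ) t₀, ft t '' B = B := by
    intro t ht
    have htIcc : t ∈ Icc (0:ℝ) t₀ := ⟨ht.1.le, ht.2⟩
    have ht1 : t < 1 := lt_of_le_of_lt ht.2 (by linarith)
    apply Subset.antisymm
    · rintro y ⟨x, hx, rfl⟩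
      exact hmapsto t htIcc x hx
    · -- openness of ft t '' ball
      have hVopen : IsOpen (ft t '' ball 0 1) := by
        rw [isOpen_iff_mem_nhds]
        rintro y ⟨x, hx, rfl⟩
        have hxB : x ∈ B := ball_subset_closedBall hx
        have hxU : x ∈ U := hBU hxB
        have hcd : ContDiffAt ℝ 1 (ft t) x := by
          exact contDiffAt_id.add ((hu.contDiffAt (hUo.mem_nhds hxU)).const_smul t)
        have hstrict : HasStrictFDerivAt (ft t) (Dft t x) x :=
          hcd.hasStrictFDerivAt' (hftd t x hxU) one_ne_zero
        have hb := hbij t htIcc x hxB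
        set eL : EuclideanSpace ℝ (Fin n) ≃L[ℝ] EuclideanSpace ℝ (Fin n) :=
          (LinearEquiv.ofBijective ((Dft t x : _) : EuclideanSpace ℝ (Fin n) →ₗ[ℝ] EuclideanSpace ℝ (Fin n)) hb).toContinuousLinearEquiv with heL
        have heq : (eL : EuclideanSpace ℝ (Fin n) →L[ℝ] EuclideanSpace ℝ (Fin n)) = Dft t x :=
          ContinuousLinearMap.ext fun v => rfl
        have hstrict' : HasStrictFDerivAt (ft t) (eL : EuclideanSpace ℝ (Fin n) →L[ℝ] EuclideanSpace ℝ (Fin n)) x := by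
          rw [heq]; exact hstrict
        have hmap := hstrict'.map_nhds_eq_of_equiv
        rw [← hmap]
        exact Filter.image_mem_map (isOpen_ball.mem_nhds hx)
      -- ft t '' ball ⊆ ball
      have hVball : ft t '' ball 0 1 ⊆ ball 0 1 := by
        rintro y ⟨x, hx, rfl⟩
        have hx1 : ‖x‖ < 1 := mem_ball_zero_iff.1 hx
        have hsplit : ft t x = (1 - t) • x + t • r x := by
          simp only [hft_def, hu_def]
          rw [smul_sub, sub_smul, one_smul]
          abel
        rw [mem_ball_zero_iff, hsplit]
        calc ‖(1 - t) • x + t • r x‖ ≤ ‖(1 - t) • x‖ + ‖t • r x‖ := norm_add_le _ _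
          _ = (1 - t) * ‖x‖ + t * ‖r x‖ := by
              rw [norm_smul, norm_smul, Real.norm_eq_abs, Real.norm_eq_abs,
                abs_of_nonneg (by linarith : (0:ℝ) ≤ 1 - t), abs_of_nonneg ht.1.le]
          _ < (1 - t) * 1 + t * 1 := by
              rw [hnorm x (hBU (ball_subset_closedBall hx))]
              have : (1 - t) * ‖x‖ < (1 - t) * 1 := by
                apply mul_lt_mul_of_pos_left hx1 (by linarith)
              linarith
          _ = 1 := by ring
      -- sphere is fixed
      have hfix : ∀ x ∈ sphere (0 : EuclideanSpace ℝ (Fin n)) 1, ft t x = x := by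
        intro x hx
        show x + t • u x = x
        rw [husphere x hx, smul_zero, add_zero]
      -- ft t '' ball = (ft t '' B) ∩ ball
      have hVcap : ft t '' ball 0 1 = (ft t '' B) ∩ ball 0 1 := by
        apply Subset.antisymm
        · intro y hy
          exact ⟨image_mono (f := ft t) ball_subset_closedBall hy, hVball hy⟩
        · intro y hy
          obtain ⟨⟨x, hxB, rfl⟩, hyball⟩ := hy
          by_cases hxs : ‖x‖ = 1
          · exfalso
            have : ft t x = x := hfix x (mem_sphere_zero_iff_norm.2 hxs)
            rw [this] at hyball
            exact (mem_ball_zero_iff.1 hyball).ne hxs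
          · exact ⟨x, mem_ball_zero_iff.2 (lt_of_le_of_ne (mem_closedBall_zero_iff.1 hxB) hxs), rfl⟩
      -- image of B is closed
      have himgB_closed : IsClosed (ft t '' B) := (hBc.image_of_continuousOn (hftcont t)).isClosed
      -- ball ⊆ ft t '' B, by connectedness
      have hball_sub : ball (0 : EuclideanSpace ℝ (Fin n)) 1 ⊆ ft t '' B := by
        by_contra hnot
        rw [not_subset] at hnot
        obtain ⟨z, hz, hz2⟩ := hnot
        have hpre := (convex_ball (0 : EuclideanSpace ℝ (Fin n)) 1).isPreconnected
        have hWopen : IsOpen ((ft t '' B)ᶜ) := himgB_closed.isOpen_compl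
        have hcover : ball (0 : EuclideanSpace ℝ (Fin n)) 1 ⊆ (ft t '' ball 0 1) ∪ (ft t '' B)ᶜ := by
          intro y hy
          by_cases h : y ∈ ft t '' B
          · left; rw [hVcap]; exact ⟨h, hy⟩
          · right; exact h
        have h0ball : (0 : EuclideanSpace ℝ (Fin n)) ∈ ball (0 : EuclideanSpace ℝ (Fin n)) 1 :=
          mem_ball_self one_pos
        have h1 : (ball (0 : EuclideanSpace ℝ (Fin n)) 1 ∩ (ft t '' ball 0 1)).Nonempty :=
          ⟨ft t 0, hVball ⟨0, h0ball, rfl⟩, ⟨0, h0ball, rfl⟩⟩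
        have h2 : (ball (0 : EuclideanSpace ℝ (Fin n)) 1 ∩ (ft t '' B)ᶜ).Nonempty := ⟨z, hz, hz2⟩
        obtain ⟨y, hy⟩ := hpre _ _ hVopen hWopen hcover h1 h2
        exact hy.2.2 (image_mono (f := ft t) ball_subset_closedBall hy.2.1)
      intro y hy
      by_cases hys : ‖y‖ = 1
      · have : ft t y = y := hfix y (mem_sphere_zero_iff_norm.2 hys)
        exact ⟨y, hy, this⟩
      · exact hball_sub (mem_ball_zero_iff.2 (lt_of_le_of_ne (mem_closedBall_zero_iff.1 hy) hys))
  -- integrability of the coefficient functions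
  have hInt : ∀ s : Finset (Fin n), IntegrableOn
      (fun x => Matrix.det (fun i => if i ∈ s then M x i else (1 : Matrix (Fin n) (Fin n) ℝ) i)) B volume := by
    intro s
    apply ContinuousOn.integrableOn_compact hBc
    apply (Continuous.matrix_det continuous_id).comp_continuousOn
    apply continuousOn_pi.2
    intro i
    show ContinuousOn (fun y => if i ∈ s then M y i else (1 : Matrix (Fin n) (Fin n) ℝ) i) B
    by_cases his : i ∈ s
    · simp only [if_pos his]
      rw [continuousOn_pi]
      intro j
      exact (continuousOn_pi.1 (continuousOn_pi.1 (hMc.mono hBU) i) j)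
    · simp only [if_neg his]
      exact continuousOn_const
  -- the polynomial
  set p : Polynomial ℝ := ∑ s : Finset (Fin n),
    Polynomial.C (∫ x in B, Matrix.det (fun i => if i ∈ s then M x i else (1 : Matrix (Fin n) (Fin n) ℝ) i))
      * Polynomial.X ^ s.card with hp_def
  have hVp : ∀ t : ℝ, ∫ x in B, (1 + t • M x).det = p.eval t := by
    intro t
    have e1 : ∫ x in B, (1 + t • M x).det
        = ∫ x in B, ∑ s : Finset (Fin n), t ^ s.card * Matrix.det (fun i => if i ∈ s then M x i else (1 : Matrix (Fin n) (Fin n) ℝ) i) := by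
      apply setIntegral_congr_fun hBmeas
      intro x _
      exact det_one_add_smul_expand t (M x)
    rw [e1]
    rw [integral_finset_sum Finset.univ (fun s _ => ((hInt s).const_mul (t ^ s.card)))]
    rw [hp_def]
    simp only [Polynomial.eval_finset_sum, Polynomial.eval_mul, Polynomial.eval_C,
      Polynomial.eval_pow, Polynomial.eval_X]
    refine Finset.sum_congr rfl fun s _ => ?_
    rw [integral_const_mul]
    ring
  -- change of variables
  have hcov : ∀ t ∈ Ioc (0:ℝ) t₀, (volume B).toReal = p.eval t := by
    intro t ht
    have htIcc : t ∈ Icc (0:ℝ) t₀ := ⟨ht.1.le, ht.2⟩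
    have h1 := integral_image_eq_integral_abs_det_fderiv_smul volume hBmeas
      (fun x hx => (hftd t x (hBU hx)).hasFDerivWithinAt) (hinjOn t htIcc)
      (fun _ => (1:ℝ))
    rw [hsurj t ht] at h1
    simp only [smul_eq_mul, mul_one] at h1
    rw [setIntegral_const] at h1
    have h2 : ∫ x in B, |(Dft t x).det| = ∫ x in B, (1 + t • M x).det := by
      apply setIntegral_congr_fun hBmeas
      intro x hx
      show |(Dft t x).det| = (1 + t • M x).det
      rw [hdet t x]
      exact abs_of_pos (hdet_pos t htIcc x hx)
    rw [h2, hVp t] at h1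
    have h1' : volume.real B = p.eval t := by simpa using h1
    exact h1'
  -- the polynomial is constant
  have hp1 : p.eval 1 = (volume B).toReal := by
    have hinf : {x : ℝ | p.eval x = (Polynomial.C ((volume B).toReal)).eval x}.Infinite := by
      apply Set.Infinite.mono (s := Ioc (0:ℝ) t₀)
      · intro t ht
        simp only [mem_setOf_eq, Polynomial.eval_C]
        exact (hcov t ht).symm
      · exact Set.Ioc_infinite ht₀pos
    have := Polynomial.eq_of_infinite_eval_eq p (Polynomial.C ((volume B).toReal)) hinf
    rw [this]
    simp
  -- at t = 1 the determinant vanishes on B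
  have hzero : ∀ x ∈ B, (1 + (1:ℝ) • M x).det = 0 := by
    intro x hx
    rw [← hdet 1 x]
    have hxU : x ∈ U := hBU hx
    -- r = ft 1
    have hftr : ft 1 = r := by
      funext y
      show y + (1:ℝ) • (r y - y) = r y
      rw [one_smul]
      abel
    have hrd : HasFDerivAt r (Dft 1 x) x := by
      rw [← hftr]
      exact hftd 1 x hxU
    -- derivative of the constant function ⟪r y, r y⟫
    have hconst : (fun y => ⟪r y, r y⟫) =ᶠ[nhds x] fun _ => (1:ℝ) := by
      filter_upwards [hUo.mem_nhds hxU] with y hy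
      rw [real_inner_self_eq_norm_mul_norm, hnorm y hy, one_mul]
    have hd0 : HasFDerivAt (fun y => ⟪r y, r y⟫) (0 : EuclideanSpace ℝ (Fin n) →L[ℝ] ℝ) x := by
      exact (hasFDerivAt_const (1:ℝ) x : HasFDerivAt _ (0 : EuclideanSpace ℝ (Fin n) →L[ℝ] ℝ) x).congr_of_eventuallyEq hconst
    have hd1 := hrd.inner ℝ hrd
    have huniq := hd1.unique hd0
    have horth : ∀ v, ⟪r x, Dft 1 x v⟫ = 0 := by
      intro v
      have happ := congrArg (fun L : EuclideanSpace ℝ (Fin n) →L[ℝ] ℝ => L v) huniq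
      simp only [ContinuousLinearMap.comp_apply, ContinuousLinearMap.prod_apply,
        fderivInnerCLM_apply, ContinuousLinearMap.zero_apply] at happ
      have hsym : ⟪Dft 1 x v, r x⟫ = ⟪r x, Dft 1 x v⟫ := real_inner_comm _ _
      rw [hsym] at happ
      linarith
    -- if the determinant were nonzero, Dft 1 x is surjective; contradiction
    by_contra hne
    have hdetlin : LinearMap.det ((Dft 1 x : _) : EuclideanSpace ℝ (Fin n) →ₗ[ℝ] EuclideanSpace ℝ (Fin n)) ≠ 0 := hne
    have hAunit : IsUnit (LinearMap.toMatrix bE bE ((Dft 1 x : _) : EuclideanSpace ℝ (Fin n) →ₗ[ℝ] EuclideanSpace ℝ (Fin n))).det := by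
      rw [LinearMap.det_toMatrix]
      exact isUnit_iff_ne_zero.2 hdetlin
    have h5 : (Matrix.toLin bE bE ((LinearMap.toMatrix bE bE ((Dft 1 x : _) : EuclideanSpace ℝ (Fin n) →ₗ[ℝ] EuclideanSpace ℝ (Fin n))) * (LinearMap.toMatrix bE bE ((Dft 1 x : _) : EuclideanSpace ℝ (Fin n) →ₗ[ℝ] EuclideanSpace ℝ (Fin n)))⁻¹)) (r x) = r x := by
      rw [Matrix.mul_nonsing_inv _ hAunit]
      simp
    rw [Matrix.toLin_mul bE bE bE] at h5
    rw [Matrix.toLin_toMatrix] at h5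
    set v : EuclideanSpace ℝ (Fin n) := Matrix.toLin bE bE ((LinearMap.toMatrix bE bE ((Dft 1 x : _) : EuclideanSpace ℝ (Fin n) →ₗ[ℝ] EuclideanSpace ℝ (Fin n)))⁻¹) (r x) with hv_def
    have hv' : Dft 1 x v = r x := by
      have := h5
      simpa [hv_def] using this
    have h4 := horth v
    rw [hv', real_inner_self_eq_norm_mul_norm, hnorm x hxU, one_mul] at h4
    exact one_ne_zero h4
  -- conclusion
  have hfinal : p.eval 1 = 0 := by
    rw [← hVp 1]
    rw [setIntegral_congr_fun hBmeas (fun x hx => hzero x hx)]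
    simp
  have hvolpos : (volume B).toReal ≠ 0 := by
    have h1 : volume B ≠ 0 := (measure_closedBall_pos volume (0 : EuclideanSpace ℝ (Fin n)) one_pos).ne'
    have h2 : volume B ≠ ⊤ := measure_closedBall_lt_top.ne
    simp [ENNReal.toReal_eq_zero_iff, h1, h2]
  rw [hp1] at hfinal
  exact hvolpos hfinal

section BrouwerSmooth
variable {n : ℕ}

variable {n : ℕ}

set_option maxHeartbeats 2000000 in
theorem brouwer_smooth {g : EuclideanSpace ℝ (Fin n) → EuclideanSpace ℝ (Fin n)}
    (hg : ContDiff ℝ 1 g)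
    (hmaps : MapsTo g (closedBall 0 1) (closedBall 0 1)) :
    ∃ x ∈ closedBall (0 : EuclideanSpace ℝ (Fin n)) 1, g x = x := by
  by_contra hcon
  push_neg at hcon
  -- the data
  set d : EuclideanSpace ℝ (Fin n) → EuclideanSpace ℝ (Fin n) := fun x => x - g x with hd_def
  set α : EuclideanSpace ℝ (Fin n) → ℝ := fun x => ⟪x, d x⟫ with hα_def
  set β : EuclideanSpace ℝ (Fin n) → ℝ := fun x => ⟪d x, d x⟫ with hβ_def
  set disc : EuclideanSpace ℝ (Fin n) → ℝ := fun x => α x ^ 2 + (1 - ⟪x, x⟫) * β x with hdisc_def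
  set lam : EuclideanSpace ℝ (Fin n) → ℝ := fun x => (-α x + Real.sqrt (disc x)) / β x with hlam_def
  set r : EuclideanSpace ℝ (Fin n) → EuclideanSpace ℝ (Fin n) := fun x => x + lam x • d x with hr_def
  set U : Set (EuclideanSpace ℝ (Fin n)) := {x | 0 < disc x ∧ 0 < β x} with hU_def
  -- continuity facts
  have hdc : Continuous d := continuous_id.sub hg.continuous
  have hαc : Continuous α := continuous_id.inner hdc
  have hβc : Continuous β := hdc.inner hdc
  have hdiscc : Continuous disc :=
    ((hαc.pow 2).add ((continuous_const.sub (continuous_id.inner continuous_id)).mul hβc))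
  have hUo : IsOpen U := by
    have h1 : IsOpen {x : EuclideanSpace ℝ (Fin n) | 0 < disc x} := isOpen_lt continuous_const hdiscc
    have h2 : IsOpen {x : EuclideanSpace ℝ (Fin n) | 0 < β x} := isOpen_lt continuous_const hβc
    exact h1.inter h2
  -- B ⊆ U
  have hBU : closedBall (0 : EuclideanSpace ℝ (Fin n)) 1 ⊆ U := by
    intro x hx
    have hdx : d x ≠ 0 := sub_ne_zero.2 fun h => hcon x hx h.symm
    have hβx : 0 < β x := by
      have h0 : 0 < ‖d x‖ := norm_pos_iff.2 hdx
      have h1 : β x = ‖d x‖ * ‖d x‖ := real_inner_self_eq_norm_mul_norm (d x)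
      nlinarith
    constructor
    · show 0 < disc x
      rcases lt_or_eq_of_le (mem_closedBall_zero_iff.1 hx) with h1 | h1
      · have : 0 < 1 - ⟪x, x⟫ := by
          have h2 : ⟪x, x⟫ = ‖x‖ * ‖x‖ := real_inner_self_eq_norm_mul_norm x
          nlinarith [norm_nonneg x]
        have := mul_pos this hβx
        simp only [hdisc_def]
        positivity
      · -- on the sphere, α x > 0
        have hxx : ⟪x, x⟫ = 1 := by
          rw [real_inner_self_eq_norm_mul_norm, h1, one_mul]
        have hgx : ‖g x‖ ≤ 1 := mem_closedBall_zero_iff.1 (hmaps hx)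
        have hαx : 0 < α x := by
          have hexp : β x = ⟪x, x⟫ - 2 * ⟪x, g x⟫ + ⟪g x, g x⟫ := by
            simp only [hβ_def, hd_def]
            simp only [inner_sub_left, inner_sub_right]
            rw [real_inner_comm (g x) x]
            ring
          have hα' : α x = 1 - ⟪x, g x⟫ := by
            simp only [hα_def, hd_def]
            simp only [inner_sub_right]
            rw [hxx]
          have hg2 : ⟪g x, g x⟫ ≤ 1 := by
            rw [real_inner_self_eq_norm_mul_norm]
            nlinarith [norm_nonneg (g x)]
          nlinarith [hβx]
        simp only [hdisc_def]
        have : (1 - ⟪x, x⟫) = 0 := by rw [hxx]; ring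
        rw [this]
        nlinarith
    · exact hβx
  -- smoothness on U
  have hrsm : ContDiffOn ℝ 1 r U := by
    intro x hx
    apply ContDiffAt.contDiffWithinAt
    have hdx : ContDiffAt ℝ 1 d x := contDiffAt_id.sub hg.contDiffAt
    have hαx : ContDiffAt ℝ 1 α x := contDiffAt_id.inner ℝ hdx
    have hβx : ContDiffAt ℝ 1 β x := hdx.inner ℝ hdx
    have hdiscx : ContDiffAt ℝ 1 disc x := by
      apply ContDiffAt.add (hαx.pow 2)
      exact (contDiffAt_const.sub (contDiffAt_id.inner ℝ contDiffAt_id)).mul hβx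
    have hsq : ContDiffAt ℝ 1 (fun y => Real.sqrt (disc y)) x :=
      (Real.contDiffAt_sqrt hx.1.ne').comp x hdiscx
    have hlamx : ContDiffAt ℝ 1 lam x := (hαx.neg.add hsq).div hβx hx.2.ne'
    exact contDiffAt_id.add (hlamx.smul hdx)
  -- norm identity on U
  have hnorm : ∀ x ∈ U, ‖r x‖ = 1 := by
    intro x hx
    have hβx : (0:ℝ) < β x := hx.2
    have hdisc0 : (0:ℝ) ≤ disc x := hx.1.le
    have hsq : Real.sqrt (disc x) ^ 2 = disc x := Real.sq_sqrt hdisc0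
    have hlb : lam x * β x = -α x + Real.sqrt (disc x) := by
      simp only [hlam_def]
      field_simp
    have hd2 : disc x = α x ^ 2 + (1 - ⟪x, x⟫) * β x := by simp only [hdisc_def]
    have key : (β x * lam x ^ 2 + 2 * α x * lam x + (⟪x, x⟫ - 1)) * β x = 0 := by
      have e1 : (β x * lam x ^ 2 + 2 * α x * lam x + (⟪x, x⟫ - 1)) * β x
          = (lam x * β x) ^ 2 + 2 * α x * (lam x * β x) + (⟪x, x⟫ - 1) * β x := by ring
      rw [e1, hlb]
      nlinarith [hsq, hd2]
    have hquad : β x * lam x ^ 2 + 2 * α x * lam x + (⟪x, x⟫ - 1) = 0 := by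
      rcases mul_eq_zero.1 key with h | h
      · exact h
      · exact absurd h hβx.ne'
    have hinner : ⟪r x, r x⟫ = 1 := by
      have hexp : ⟪r x, r x⟫ = ⟪x, x⟫ + 2 * lam x * α x + lam x ^ 2 * β x := by
        simp only [hr_def, inner_add_left, inner_add_right, real_inner_smul_left,
          real_inner_smul_right, hα_def, hβ_def]
        rw [real_inner_comm (d x) x]
        ring
      rw [hexp]
      nlinarith [hquad]
    have hnn := real_inner_self_eq_norm_mul_norm (r x)
    rw [hinner] at hnn
    nlinarith [norm_nonneg (r x)]
  -- identity on the sphere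
  have hid : ∀ x ∈ sphere (0 : EuclideanSpace ℝ (Fin n)) 1, r x = x := by
    intro x hx
    have hx1 : ‖x‖ = 1 := mem_sphere_zero_iff_norm.1 hx
    have hxB : x ∈ closedBall (0 : EuclideanSpace ℝ (Fin n)) 1 :=
      mem_closedBall_zero_iff.2 hx1.le
    have hxx : ⟪x, x⟫ = 1 := by rw [real_inner_self_eq_norm_mul_norm, hx1, one_mul]
    have hαpos : 0 < α x := by
      have h2 := (hBU hxB).1
      simp only [hdisc_def] at h2
      -- disc = α² since 1 - ⟪x,x⟫ = 0; and from the proof above α > 0; redo: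
      have hgx : ‖g x‖ ≤ 1 := mem_closedBall_zero_iff.1 (hmaps hxB)
      have hdx : d x ≠ 0 := sub_ne_zero.2 fun h => hcon x hxB h.symm
      have hβx : 0 < β x := by
        have h0 : 0 < ‖d x‖ := norm_pos_iff.2 hdx
        have h1 : β x = ‖d x‖ * ‖d x‖ := real_inner_self_eq_norm_mul_norm (d x)
        nlinarith
      have hexp : β x = ⟪x, x⟫ - 2 * ⟪x, g x⟫ + ⟪g x, g x⟫ := by
        simp only [hβ_def, hd_def]
        simp only [inner_sub_left, inner_sub_right]
        rw [real_inner_comm (g x) x]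
        ring
      have hα' : α x = 1 - ⟪x, g x⟫ := by
        simp only [hα_def, hd_def]
        simp only [inner_sub_right]
        rw [hxx]
      have hg2 : ⟪g x, g x⟫ ≤ 1 := by
        rw [real_inner_self_eq_norm_mul_norm]
        nlinarith [norm_nonneg (g x)]
      nlinarith
    have hlam0 : lam x = 0 := by
      simp only [hlam_def]
      have : disc x = α x ^ 2 := by
        simp only [hdisc_def]
        rw [show (1 : ℝ) - ⟪x, x⟫ = 0 by rw [hxx]; ring]
        ring
      rw [this, Real.sqrt_sq hαpos.le]
      simp
    simp only [hr_def]
    simp only [hlam0, zero_smul, add_zero]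
  exact no_retraction hUo hBU hrsm hnorm hid

end BrouwerSmooth

set_option maxHeartbeats 1000000 in
theorem brouwer_unit {n : ℕ} {g : EuclideanSpace ℝ (Fin n) → EuclideanSpace ℝ (Fin n)}
    (hg : ContinuousOn g (closedBall 0 1))
    (hmaps : MapsTo g (closedBall 0 1) (closedBall 0 1)) :
    ∃ x ∈ closedBall (0 : EuclideanSpace ℝ (Fin n)) 1, g x = x := by
  by_contra hcon
  push_neg at hcon
  -- minimum displacement
  have hBc : IsCompact (closedBall (0 : EuclideanSpace ℝ (Fin n)) 1) := isCompact_closedBall _ _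
  have hBne : (closedBall (0 : EuclideanSpace ℝ (Fin n)) 1).Nonempty :=
    ⟨0, mem_closedBall_self one_pos.le⟩
  have hφc : ContinuousOn (fun x => dist (g x) x) (closedBall (0 : EuclideanSpace ℝ (Fin n)) 1) :=
    by have := continuous_dist.comp_continuousOn (hg.prodMk continuousOn_id); exact this
  obtain ⟨x₀, hx₀B, hx₀min⟩ := hBc.exists_isMinOn hBne hφc
  set ε : ℝ := dist (g x₀) x₀ with hε_def
  have hεpos : 0 < ε := dist_pos.2 (hcon x₀ hx₀B)
  have hεmin : ∀ x ∈ closedBall (0 : EuclideanSpace ℝ (Fin n)) 1, ε ≤ dist (g x) x :=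
    fun x hx => hx₀min hx
  -- extension of g to all of the space
  set proj : EuclideanSpace ℝ (Fin n) → EuclideanSpace ℝ (Fin n) :=
    fun x => (max 1 ‖x‖)⁻¹ • x with hproj_def
  have hmaxpos : ∀ x : EuclideanSpace ℝ (Fin n), (0:ℝ) < max 1 ‖x‖ :=
    fun x => lt_of_lt_of_le one_pos (le_max_left _ _)
  have hproj_cont : Continuous proj := by
    refine Continuous.smul (f := fun x => (max 1 ‖x‖)⁻¹) (g := id) ?_ ?_
    · exact (continuous_const.max continuous_norm).inv₀ (fun x => (hmaxpos x).ne')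
    · exact continuous_id
  have hproj_mem : ∀ x, proj x ∈ closedBall (0 : EuclideanSpace ℝ (Fin n)) 1 := by
    intro x
    rw [mem_closedBall_zero_iff, hproj_def]
    rw [norm_smul, norm_inv, Real.norm_eq_abs, abs_of_pos (hmaxpos x)]
    rw [inv_mul_le_one₀ (hmaxpos x)]
    exact le_max_right _ _
  have hproj_id : ∀ x ∈ closedBall (0 : EuclideanSpace ℝ (Fin n)) 1, proj x = x := by
    intro x hx
    simp only [hproj_def]
    rw [max_eq_left (mem_closedBall_zero_iff.1 hx), inv_one, one_smul]
  set G : EuclideanSpace ℝ (Fin n) → EuclideanSpace ℝ (Fin n) := fun x => g (proj x) with hG_def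
  have hGc : Continuous G := hg.comp_continuous hproj_cont hproj_mem
  have hGB : ∀ x, G x ∈ closedBall (0 : EuclideanSpace ℝ (Fin n)) 1 := fun x => hmaps (hproj_mem x)
  have hGg : ∀ x ∈ closedBall (0 : EuclideanSpace ℝ (Fin n)) 1, G x = g x := by
    intro x hx
    simp only [hG_def]
    rw [hproj_id x hx]
  -- uniform continuity on a compact neighborhood
  have hK : IsCompact (closedBall (0 : EuclideanSpace ℝ (Fin n)) 2) := isCompact_closedBall _ _
  have hucG : UniformContinuousOn G (closedBall (0 : EuclideanSpace ℝ (Fin n)) 2) :=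
    hK.uniformContinuousOn_of_continuous hGc.continuousOn
  obtain ⟨δ, hδpos, hδ⟩ := (Metric.uniformContinuousOn_iff.1 hucG) (ε/3) (by positivity)
  set ρ : ℝ := min (δ/2) 1 with hρ_def
  have hρpos : 0 < ρ := lt_min (by positivity) one_pos
  have hρle1 : ρ ≤ 1 := min_le_right _ _
  -- bump function and convolution
  set φb : ContDiffBump (0 : EuclideanSpace ℝ (Fin n)) :=
    ⟨ρ/2, ρ, by positivity, by linarith⟩ with hφb_def
  set g1 : EuclideanSpace ℝ (Fin n) → EuclideanSpace ℝ (Fin n) :=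
    φb.normed volume ⋆[ContinuousLinearMap.lsmul ℝ ℝ, volume] G with hg1_def
  have hg1smooth : ContDiff ℝ 1 g1 :=
    φb.hasCompactSupport_normed.contDiff_convolution_left _ φb.contDiff_normed
      (hGc.locallyIntegrable)
  have hg1close : ∀ x₀' ∈ closedBall (0 : EuclideanSpace ℝ (Fin n)) 1, dist (g1 x₀') (G x₀') ≤ ε/3 := by
    intro y hy
    apply φb.dist_normed_convolution_le hGc.aestronglyMeasurable
    intro x hx
    have hxK : x ∈ closedBall (0 : EuclideanSpace ℝ (Fin n)) 2 := by
      rw [mem_closedBall_zero_iff]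
      have h1 : dist x y < ρ := mem_ball.1 hx
      have h2 : ‖y‖ ≤ 1 := mem_closedBall_zero_iff.1 hy
      have h3 : ‖x‖ ≤ ‖x - y‖ + ‖y‖ := by
        calc ‖x‖ = ‖(x - y) + y‖ := by rw [sub_add_cancel]
          _ ≤ ‖x - y‖ + ‖y‖ := norm_add_le _ _
      have h4 : ‖x - y‖ < ρ := by rw [← dist_eq_norm]; exact h1
      linarith
    have hyK : y ∈ closedBall (0 : EuclideanSpace ℝ (Fin n)) 2 :=
      closedBall_subset_closedBall (by norm_num) hy
    have h1 : dist x y < ρ := mem_ball.1 hx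
    have h5 : dist x y < δ := lt_of_lt_of_le (lt_of_lt_of_le h1 (min_le_left _ _)) (by linarith)
    exact (hδ x hxK y hyK h5).le
  -- rescale into the ball
  set c1 : ℝ := (1 + ε/3)⁻¹ with hc1_def
  have hc1pos : 0 < c1 := by positivity
  have hc1le : c1 ≤ 1 := by
    rw [hc1_def]
    rw [inv_le_one_iff₀]
    right
    linarith
  set g2 : EuclideanSpace ℝ (Fin n) → EuclideanSpace ℝ (Fin n) := fun x => c1 • g1 x with hg2_def
  have hg2smooth : ContDiff ℝ 1 g2 := hg1smooth.const_smul c1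
  have hg1bound : ∀ x ∈ closedBall (0 : EuclideanSpace ℝ (Fin n)) 1, ‖g1 x‖ ≤ 1 + ε/3 := by
    intro x hx
    have h := hg1close x hx
    rw [dist_eq_norm] at h
    have h2 : ‖G x‖ ≤ 1 := mem_closedBall_zero_iff.1 (hGB x)
    calc ‖g1 x‖ = ‖(g1 x - G x) + G x‖ := by rw [sub_add_cancel]
      _ ≤ ‖g1 x - G x‖ + ‖G x‖ := norm_add_le _ _
      _ ≤ ε/3 + 1 := add_le_add h h2
      _ = 1 + ε/3 := by ring
  have hg2maps : MapsTo g2 (closedBall (0 : EuclideanSpace ℝ (Fin n)) 1)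
      (closedBall (0 : EuclideanSpace ℝ (Fin n)) 1) := by
    intro x hx
    rw [mem_closedBall_zero_iff, hg2_def]
    rw [norm_smul, Real.norm_eq_abs, abs_of_pos hc1pos]
    calc c1 * ‖g1 x‖ ≤ c1 * (1 + ε/3) := mul_le_mul_of_nonneg_left (hg1bound x hx) hc1pos.le
      _ = 1 := by
          rw [hc1_def]
          field_simp
  have hg2close : ∀ x ∈ closedBall (0 : EuclideanSpace ℝ (Fin n)) 1, dist (g2 x) (g1 x) ≤ ε/3 := by
    intro x hx
    rw [dist_eq_norm, hg2_def]
    have h1 : c1 • g1 x - g1 x = (c1 - 1) • g1 x := by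
      rw [sub_smul, one_smul]
    rw [h1, norm_smul, Real.norm_eq_abs, abs_of_nonpos (by linarith : c1 - 1 ≤ 0)]
    have h2 : -(c1 - 1) * ‖g1 x‖ ≤ (1 - c1) * (1 + ε/3) := by
      have := hg1bound x hx
      nlinarith [norm_nonneg (g1 x)]
    have h3 : (1 - c1) * (1 + ε/3) = ε/3 := by
      rw [hc1_def]
      field_simp
      ring
    linarith
  obtain ⟨x, hxB, hfix⟩ := brouwer_smooth hg2smooth hg2maps
  have htri : dist (g x) x ≤ dist (g x) (g1 x) + dist (g1 x) (g2 x) + dist (g2 x) x :=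
    dist_triangle4 _ _ _ _
  have h6 : dist (g x) (g1 x) ≤ ε/3 := by
    rw [← hGg x hxB, dist_comm]
    exact hg1close x hxB
  have h7 : dist (g1 x) (g2 x) ≤ ε/3 := by
    rw [dist_comm]
    exact hg2close x hxB
  have h8 : dist (g2 x) x = 0 := by rw [hfix, dist_self]
  have h9 := hεmin x hxB
  rw [h8] at htri
  linarith

theorem brouwer_ball {n : ℕ} {c : EuclideanSpace ℝ (Fin n)} {R : ℝ} (hR : 0 < R)
    {g : EuclideanSpace ℝ (Fin n) → EuclideanSpace ℝ (Fin n)}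
    (hg : ContinuousOn g (closedBall c R)) (hmaps : MapsTo g (closedBall c R) (closedBall c R)) :
    ∃ x ∈ closedBall c R, g x = x := by
  set T : EuclideanSpace ℝ (Fin n) → EuclideanSpace ℝ (Fin n) := fun y => c + R • y with hT_def
  have hTcont : Continuous T := continuous_const.add (continuous_const_smul R)
  have hTmem : ∀ y ∈ closedBall (0 : EuclideanSpace ℝ (Fin n)) 1, T y ∈ closedBall c R := by
    intro y hy
    rw [mem_closedBall, dist_eq_norm, hT_def]
    have : c + R • y - c = R • y := by abel
    rw [this, norm_smul, Real.norm_eq_abs, abs_of_pos hR]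
    calc R * ‖y‖ ≤ R * 1 := mul_le_mul_of_nonneg_left (mem_closedBall_zero_iff.1 hy) hR.le
      _ = R := mul_one R
  set g' : EuclideanSpace ℝ (Fin n) → EuclideanSpace ℝ (Fin n) :=
    fun y => R⁻¹ • (g (T y) - c) with hg'_def
  have hg'cont : ContinuousOn g' (closedBall 0 1) := by
    refine ContinuousOn.smul (f := fun _ => R⁻¹) (g := fun y => g (T y) - c) continuousOn_const ?_
    apply ContinuousOn.sub _ continuousOn_const
    exact hg.comp hTcont.continuousOn hTmem
  have hg'maps : MapsTo g' (closedBall (0 : EuclideanSpace ℝ (Fin n)) 1)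
      (closedBall (0 : EuclideanSpace ℝ (Fin n)) 1) := by
    intro y hy
    rw [mem_closedBall_zero_iff, hg'_def]
    rw [norm_smul, norm_inv, Real.norm_eq_abs, abs_of_pos hR]
    have h1 : ‖g (T y) - c‖ ≤ R := by
      rw [← dist_eq_norm]
      exact mem_closedBall.1 (hmaps (hTmem y hy))
    rw [inv_mul_le_one₀ hR]
    exact h1
  obtain ⟨y, hyB, hyfix⟩ := brouwer_unit hg'cont hg'maps
  refine ⟨T y, hTmem y hyB, ?_⟩
  have h2 : R⁻¹ • (g (T y) - c) = y := hyfix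
  have h3 : g (T y) - c = R • y := by
    have := congrArg (fun z => R • z) h2
    simpa [smul_smul, mul_inv_cancel₀ hR.ne'] using this
  rw [hT_def]
  show g (c + R • y) = c + R • y
  have : g (T y) = c + R • y := by
    rw [← h3]
    abel
  simpa [hT_def] using this

/-- A nondegenerate critical point `a` of a `C²` function `f : ℝⁿ → ℝ` is a
`C¹`-stable critical point: for every `μ > 0` there is `δ > 0` such that any `C¹`
function `h` with `|f x - h x| + ‖∇f x - ∇h x‖ ≤ δ` on the ball of radius `μ` around
`a` has a critical point `q` with `‖q - a‖ < μ`. -/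
theorem nondegenerate_critical_point_is_C1_stable {n : ℕ}
    (f : EuclideanSpace ℝ (Fin n) → ℝ) (hf : ContDiff ℝ 2 f)
    (a : EuclideanSpace ℝ (Fin n))
    (ha : gradient f a = 0)
    (hnd : Bijective (fderiv ℝ (gradient f) a)) :
    ∀ μ > (0 : ℝ), ∃ δ > (0 : ℝ),
      ∀ h : EuclideanSpace ℝ (Fin n) → ℝ, ContDiff ℝ 1 h →
        (∀ x, ‖x - a‖ ≤ μ → |f x - h x| + ‖gradient f x - gradient h x‖ ≤ δ) →
        ∃ q, ‖q - a‖ < μ ∧ gradient h q = 0 := by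
  intro μ hμ
  -- the gradient of f is C¹, hence differentiable at a
  have hfd : ContDiff ℝ 1 (fderiv ℝ f) := hf.fderiv_right (by norm_num)
  have hgradf : ContDiff ℝ 1 (gradient f) := by
    have : gradient f = fun x => (InnerProductSpace.toDual ℝ (EuclideanSpace ℝ (Fin n))).symm (fderiv ℝ f x) := rfl
    rw [this]
    exact (InnerProductSpace.toDual ℝ (EuclideanSpace ℝ (Fin n))).symm.contDiff.comp hfd
  set A : EuclideanSpace ℝ (Fin n) →L[ℝ] EuclideanSpace ℝ (Fin n) := fderiv ℝ (gradient f) a with hA_def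
  have hA : HasFDerivAt (gradient f) A a :=
    ((hgradf.differentiable one_ne_zero) a).hasFDerivAt
  -- A as a continuous linear equivalence
  have hndl : Bijective ((A : EuclideanSpace ℝ (Fin n) →ₗ[ℝ] EuclideanSpace ℝ (Fin n))) := hnd
  set A' : EuclideanSpace ℝ (Fin n) ≃L[ℝ] EuclideanSpace ℝ (Fin n) :=
    (LinearEquiv.ofBijective (A : EuclideanSpace ℝ (Fin n) →ₗ[ℝ] EuclideanSpace ℝ (Fin n)) hndl).toContinuousLinearEquiv with hA'_def
  have hA'app : ∀ v, A' v = A v := fun v => rfl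
  set K : ℝ := ‖(A'.symm : EuclideanSpace ℝ (Fin n) →L[ℝ] EuclideanSpace ℝ (Fin n))‖ + 1 with hK_def
  have hKpos : 0 < K := by
    rw [hK_def]
    positivity
  have hKnorm : ‖(A'.symm : EuclideanSpace ℝ (Fin n) →L[ℝ] EuclideanSpace ℝ (Fin n))‖ ≤ K := by
    rw [hK_def]; linarith
  -- choose the radius r from differentiability
  have hlittle := hA.isLittleO
  rw [Asymptotics.isLittleO_iff] at hlittle
  have hc : (0:ℝ) < 1 / (2 * K) := by positivity
  have hev := hlittle hc
  rw [Metric.eventually_nhds_iff] at hev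
  obtain ⟨r₀, hr₀pos, hr₀⟩ := hev
  set r : ℝ := min (μ/2) (r₀/2) with hr_def
  have hrpos : 0 < r := lt_min (by linarith) (by linarith)
  have hrμ : r ≤ μ/2 := min_le_left _ _
  have hball : ∀ x, ‖x - a‖ ≤ r → ‖gradient f x - A (x - a)‖ ≤ 1/(2*K) * ‖x - a‖ := by
    intro x hx
    have hdist : dist x a < r₀ := by
      rw [dist_eq_norm]
      calc ‖x - a‖ ≤ r := hx
        _ ≤ r₀/2 := min_le_right _ _
        _ < r₀ := by linarith
    have := hr₀ hdist
    rw [ha, sub_zero] at this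
    exact this
  -- the δ
  refine ⟨r / (2 * K), by positivity, ?_⟩
  intro h hh hclose
  have hgradh_cont : Continuous (gradient h) := by
    have : gradient h = fun x => (InnerProductSpace.toDual ℝ (EuclideanSpace ℝ (Fin n))).symm (fderiv ℝ h x) := rfl
    rw [this]
    exact (InnerProductSpace.toDual ℝ (EuclideanSpace ℝ (Fin n))).symm.continuous.comp
      (hh.continuous_fderiv one_ne_zero)
  -- the fixed point map
  set Φ : EuclideanSpace ℝ (Fin n) → EuclideanSpace ℝ (Fin n) :=
    fun x => x - A'.symm (gradient h x) with hΦ_def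
  have hΦcont : ContinuousOn Φ (closedBall a r) :=
    (continuous_id.sub (A'.symm.continuous.comp hgradh_cont)).continuousOn
  have hΦmaps : MapsTo Φ (closedBall a r) (closedBall a r) := by
    intro x hx
    have hxr : ‖x - a‖ ≤ r := by
      rw [← dist_eq_norm]
      exact mem_closedBall.1 hx
    have hxμ : ‖x - a‖ ≤ μ := le_trans hxr (by linarith)
    have hgfh : ‖gradient f x - gradient h x‖ ≤ r / (2 * K) := by
      have h1 := hclose x hxμ
      have h2 : (0:ℝ) ≤ |f x - h x| := abs_nonneg _
      linarith
    have hkey : Φ x - a = A'.symm (A (x - a) - gradient h x) := by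
      rw [hΦ_def]
      have h3 : A'.symm (A (x - a)) = x - a := by
        rw [← hA'app]
        exact A'.symm_apply_apply _
      rw [map_sub, h3]
      exact sub_right_comm _ _ _
    rw [mem_closedBall, dist_eq_norm, hkey]
    have h4 : ‖A (x - a) - gradient h x‖ ≤ r / K := by
      calc ‖A (x - a) - gradient h x‖
          ≤ ‖A (x - a) - gradient f x‖ + ‖gradient f x - gradient h x‖ := by
            have := norm_sub_le_norm_sub_add_norm_sub (A (x-a)) (gradient f x) (gradient h x)
            linarith [norm_sub_le (A (x - a) - gradient f x) (gradient f x - gradient h x)]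
        _ ≤ 1/(2*K) * ‖x - a‖ + r / (2*K) := by
            have h5 : ‖A (x - a) - gradient f x‖ = ‖gradient f x - A (x - a)‖ := norm_sub_rev _ _
            rw [h5]
            exact add_le_add (hball x hxr) hgfh
        _ ≤ 1/(2*K) * r + r / (2*K) := by
            have : 1/(2*K) * ‖x - a‖ ≤ 1/(2*K) * r := by
              apply mul_le_mul_of_nonneg_left hxr (by positivity)
            linarith
        _ = r / K := by field_simp; ring
    calc ‖A'.symm (A (x - a) - gradient h x)‖
        ≤ ‖(A'.symm : EuclideanSpace ℝ (Fin n) →L[ℝ] EuclideanSpace ℝ (Fin n))‖ * ‖A (x - a) - gradient h x‖ :=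
          (A'.symm : EuclideanSpace ℝ (Fin n) →L[ℝ] EuclideanSpace ℝ (Fin n)).le_opNorm _
      _ ≤ K * (r / K) := by
          apply mul_le_mul hKnorm h4 (norm_nonneg _) hKpos.le
      _ = r := by field_simp
  obtain ⟨q, hqB, hqfix⟩ := brouwer_ball hrpos hΦcont hΦmaps
  refine ⟨q, ?_, ?_⟩
  · have : ‖q - a‖ ≤ r := by
      rw [← dist_eq_norm]
      exact mem_closedBall.1 hqB
    linarith [hrμ, hμ]
  · have h6 : A'.symm (gradient h q) = 0 := by
      have := hqfix
      rw [hΦ_def] at this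
      have h7 : q - A'.symm (gradient h q) = q := this
      have := sub_eq_self.1 h7
      exact this
    have := congrArg A' h6
    rw [A'.apply_symm_apply, map_zero] at this
    exact this
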